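/- Fix α, β with 0 ≤ β ≤ α < 1 and n ≥ 1, and set β_n = 1 − (1−β)^{1/n}. Let p₁, …, pₙ be independent random variables on [0,1] each with non-decreasing density (uniform for indices in the null set). Then the procedure that rejects the null H_{0,W} corresponding to the smallest p-value W when p_(1) ≤ ((α−β)/(1−β))·p_(2) + (1 − (α−β)/(1−β))·β_n has probability of false rejection at most α, whenever H_{0,W} is among the true nulls. -/

import Mathlib

open MeasureTheory ProbabilityTheory Set

/-- Uniform measure of a left-open interval inside `[0,1]`. -/
lemma hybrid_uniform_Ioc_apply {a b : ℝ} (ha : 0 ≤ a) (hb : b ≤ 1) :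
    (volume.restrict (Set.Icc (0:ℝ) 1)) {x | a < x ∧ x ≤ b} = ENNReal.ofReal (b - a) := by
  have h1 : {x : ℝ | a < x ∧ x ≤ b} = Ioc a b := rfl
  rw [h1, Measure.restrict_apply measurableSet_Ioc]
  have h2 : Ioc a b ∩ Icc (0:ℝ) 1 = Ioc a b := by
    apply inter_eq_left.mpr
    intro x hx
    exact ⟨le_trans ha (le_of_lt hx.1), le_trans hx.2 hb⟩
  rw [h2, Real.volume_Ioc]

/-- Two independent random variables, one uniform on `[0,1]`, are a.s. distinct. -/
lemma hybrid_ties {Ω : Type*} [MeasurableSpace Ω] (μ : Measure Ω) [IsProbabilityMeasure μ]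
    (Z X : Ω → ℝ) (hZ : Measurable Z) (hX : Measurable X) (hind : IndepFun Z X μ)
    (hXu : μ.map X = volume.restrict (Set.Icc (0:ℝ) 1)) :
    μ {ω | Z ω = X ω} = 0 := by
  have hmap : μ.map (fun ω => (Z ω, X ω)) = (μ.map Z).prod (μ.map X) :=
    (indepFun_iff_map_prod_eq_prod_map_map hZ.aemeasurable hX.aemeasurable).mp hind
  have hS : MeasurableSet {q : ℝ × ℝ | q.1 = q.2} :=
    measurableSet_eq_fun measurable_fst measurable_snd
  have h1 : {ω | Z ω = X ω} = (fun ω => (Z ω, X ω)) ⁻¹' {q : ℝ × ℝ | q.1 = q.2} := rfl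
  rw [h1, ← Measure.map_apply (hZ.prodMk hX) hS, hmap, Measure.prod_apply hS]
  have hpre : ∀ z : ℝ, Prod.mk z ⁻¹' {q : ℝ × ℝ | q.1 = q.2} = {z} := by
    intro z; ext x; simp [eq_comm]
  have h4 : ∀ z : ℝ, (μ.map X) {z} = 0 := by
    intro z
    rw [hXu, Measure.restrict_apply (measurableSet_singleton z)]
    exact measure_mono_null inter_subset_left Real.volume_singleton
  simp [hpre, h4]

/-- Key conditional bound: if `X` is uniform on `[0,1]` and independent of the vector `Y`
whose coordinates lie a.s. in `[0,1]`, then the probability of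
`bn < X ≤ bn + γ (min Y - bn)` is at most `γ` times that of `bn < X ≤ min Y`. -/
lemma hybrid_key {Ω : Type*} [MeasurableSpace Ω] (μ : Measure Ω) [IsProbabilityMeasure μ]
    {κ : Type*} [Fintype κ] [Nonempty κ]
    (γ bn : ℝ) (hγ0 : 0 ≤ γ) (hγ1 : γ ≤ 1) (hbn0 : 0 ≤ bn) (hbn1 : bn ≤ 1)
    (X : Ω → ℝ) (Y : Ω → κ → ℝ) (hX : Measurable X) (hY : Measurable Y)
    (hXY : IndepFun X Y μ)
    (hXu : μ.map X = volume.restrict (Set.Icc (0:ℝ) 1))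
    (hYae : ∀ᵐ y ∂(μ.map Y), ∀ i, y i ∈ Set.Icc (0:ℝ) 1) :
    μ {ω | bn < X ω ∧ X ω ≤ bn + γ * ((⨅ i, Y ω i) - bn)}
      ≤ ENNReal.ofReal γ * μ {ω | bn < X ω ∧ X ω ≤ ⨅ i, Y ω i} := by
  classical
  set h : (κ → ℝ) → ℝ := fun y => ⨅ i, y i with hh
  have hhm : Measurable h := Measurable.iInf (fun i => measurable_pi_apply i)
  have hmap : μ.map (fun ω => (Y ω, X ω)) = (μ.map Y).prod (μ.map X) :=
    (indepFun_iff_map_prod_eq_prod_map_map hY.aemeasurable hX.aemeasurable).mp hXY.symm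
  set SA : Set ((κ → ℝ) × ℝ) := {q | bn < q.2 ∧ q.2 ≤ bn + γ * (h q.1 - bn)} with hSA
  set SC : Set ((κ → ℝ) × ℝ) := {q | bn < q.2 ∧ q.2 ≤ h q.1} with hSC
  have hSAm : MeasurableSet SA :=
    (measurableSet_lt measurable_const measurable_snd).inter
      (measurableSet_le measurable_snd
        (measurable_const.add (((hhm.comp measurable_fst).sub measurable_const).const_mul γ)))
  have hSCm : MeasurableSet SC :=
    (measurableSet_lt measurable_const measurable_snd).inter
      (measurableSet_le measurable_snd (hhm.comp measurable_fst))
  have hZ : Measurable (fun ω => (Y ω, X ω)) := hY.prodMk hX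
  have hA : {ω | bn < X ω ∧ X ω ≤ bn + γ * ((⨅ i, Y ω i) - bn)}
      = (fun ω => (Y ω, X ω)) ⁻¹' SA := rfl
  have hC : {ω | bn < X ω ∧ X ω ≤ ⨅ i, Y ω i} = (fun ω => (Y ω, X ω)) ⁻¹' SC := rfl
  rw [hA, hC, ← Measure.map_apply hZ hSAm, ← Measure.map_apply hZ hSCm, hmap,
    Measure.prod_apply hSAm, Measure.prod_apply hSCm]
  have key : ∀ᵐ y ∂(μ.map Y),
      (μ.map X) (Prod.mk y ⁻¹' SA)
        = ENNReal.ofReal γ * (μ.map X) (Prod.mk y ⁻¹' SC) := by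
    filter_upwards [hYae] with y hy
    have hhy0 : 0 ≤ h y := le_ciInf fun i => (hy i).1
    have hhy1 : h y ≤ 1 :=
      le_trans (ciInf_le (Set.Finite.bddBelow (finite_range _)) (Classical.arbitrary κ))
        (hy (Classical.arbitrary κ)).2
    have hpreA : Prod.mk y ⁻¹' SA = {x | bn < x ∧ x ≤ bn + γ * (h y - bn)} := rfl
    have hpreC : Prod.mk y ⁻¹' SC = {x | bn < x ∧ x ≤ h y} := rfl
    have h1 : γ * (h y - bn) ≤ γ * (1 - bn) :=
      mul_le_mul_of_nonneg_left (by linarith) hγ0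
    have h2 : γ * (1 - bn) ≤ 1 - bn := by nlinarith
    have hcA1 : bn + γ * (h y - bn) ≤ 1 := by linarith
    rw [hpreA, hpreC, hXu, hybrid_uniform_Ioc_apply hbn0 hcA1,
      hybrid_uniform_Ioc_apply hbn0 hhy1,
      show bn + γ * (h y - bn) - bn = γ * (h y - bn) by ring,
      ENNReal.ofReal_mul hγ0]
  rw [lintegral_congr_ae key, lintegral_const_mul' _ _ ENNReal.ofReal_ne_top]

/-- Type I error control of hybrid inference: the probability that the
winner corresponds to a true null and the hybrid cutoff rejects it is at most `α`. -/
theorem hybrid_inference_type_one_error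
    {Ω : Type*} [MeasurableSpace Ω] (μpr : Measure Ω) [IsProbabilityMeasure μpr]
    (α β : ℝ) (hβ0 : 0 ≤ β) (hβα : β ≤ α) (hα1 : α < 1)
    (n : ℕ) (hn : 2 ≤ n)
    (p : Fin n → Ω → ℝ) (hmeas : ∀ i, Measurable (p i))
    (hindep : iIndepFun p μpr)
    (f : Fin n → ℝ → ℝ)
    (hmono : ∀ i, MonotoneOn (f i) (Set.Icc (0:ℝ) 1))
    (hf_nonneg : ∀ i, ∀ x ∈ Set.Icc (0:ℝ) 1, 0 ≤ f i x)
    (hdens : ∀ i, μpr.map (p i)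
      = (volume.restrict (Set.Icc (0:ℝ) 1)).withDensity (fun x => ENNReal.ofReal (f i x)))
    -- T is the set of true nulls, whose p-values are exactly uniform
    (T : Set (Fin n))
    (hnull : ∀ i ∈ T, μpr.map (p i) = volume.restrict (Set.Icc (0:ℝ) 1)) :
    μpr {ω | ∃ j ∈ T, (∀ i, i ≠ j → p j ω ≤ p i ω) ∧
        p j ω ≤ ((α - β) / (1 - β)) * (⨅ i : {i : Fin n // i ≠ j}, p i.1 ω)
          + (1 - (α - β) / (1 - β)) * (1 - (1 - β) ^ ((1 : ℝ) / n))}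
      ≤ ENNReal.ofReal α := by
  classical
  have hβ1 : β < 1 := lt_of_le_of_lt hβα hα1
  have h1β : (0:ℝ) < 1 - β := by linarith
  set c : ℝ := (1 - β) ^ ((1 : ℝ) / n) with hcdef
  have hc0 : 0 < c := Real.rpow_pos_of_pos h1β _
  have hc1 : c ≤ 1 := Real.rpow_le_one (le_of_lt h1β) (by linarith) (by positivity)
  set bn : ℝ := 1 - c with hbndef
  have hbn0 : 0 ≤ bn := by simp only [hbndef]; linarith
  have hbn1 : bn ≤ 1 := by simp only [hbndef]; linarith
  set γ : ℝ := (α - β) / (1 - β) with hγdef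
  have hγ0 : 0 ≤ γ := div_nonneg (by linarith) (le_of_lt h1β)
  have hγ1 : γ ≤ 1 := by rw [hγdef, div_le_one h1β]; linarith
  have hnn : (n:ℝ) ≠ 0 := Nat.cast_ne_zero.mpr (by omega)
  have hcn : c ^ n = 1 - β := by
    rw [hcdef, ← Real.rpow_natCast ((1 - β) ^ ((1:ℝ)/n)) n,
      ← Real.rpow_mul (le_of_lt h1β), one_div, inv_mul_cancel₀ hnn, Real.rpow_one]
  -- sets and functions
  set M : Fin n → Ω → ℝ := fun j ω => ⨅ i : {i : Fin n // i ≠ j}, p i.1 ω with hM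
  have hMm : ∀ j, Measurable (M j) := fun j => Measurable.iInf (fun i => hmeas i.1)
  set A : Fin n → Set Ω := fun j => {ω | bn < p j ω ∧ p j ω ≤ bn + γ * (M j ω - bn)} with hAdef
  set C : Fin n → Set Ω := fun j => {ω | bn < p j ω ∧ p j ω ≤ M j ω} with hCdef
  set s : Finset (Fin n) := T.toFinite.toFinset with hsdef
  have hmem : ∀ i, i ∈ s ↔ i ∈ T := fun i => T.toFinite.mem_toFinset
  set G : Set Ω := ⋂ i ∈ s, {ω | bn < p i ω} with hGdef
  have hGm : MeasurableSet G :=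
    MeasurableSet.biInter (s.countable_toSet)
      (fun i _ => measurableSet_lt measurable_const (hmeas i))
  -- a.e. all p-values are in [0,1]
  have hae_unit : ∀ i : Fin n, ∀ᵐ ω ∂μpr, p i ω ∈ Set.Icc (0:ℝ) 1 := by
    intro i
    have h0 : μpr.map (p i) (Set.Icc (0:ℝ) 1)ᶜ = 0 := by
      rw [hdens i]
      refine (withDensity_absolutelyContinuous _ _) ?_
      rw [Measure.restrict_apply measurableSet_Icc.compl]
      simp
    rw [Measure.map_apply (hmeas i) measurableSet_Icc.compl] at h0
    rw [ae_iff]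
    exact h0
  have hall : ∀ᵐ ω ∂μpr, ∀ i : Fin n, p i ω ∈ Set.Icc (0:ℝ) 1 := ae_all_iff.mpr hae_unit
  -- covering: the event is contained in Gᶜ ∪ ⋃ A j
  have hcover : {ω | ∃ j ∈ T, (∀ i, i ≠ j → p j ω ≤ p i ω) ∧
        p j ω ≤ γ * (⨅ i : {i : Fin n // i ≠ j}, p i.1 ω) + (1 - γ) * bn}
      ⊆ Gᶜ ∪ ⋃ j ∈ s, A j := by
    rintro ω ⟨j, hjT, _hmin, hcut⟩
    by_cases hωG : ω ∈ G
    · right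
      refine mem_biUnion ((hmem j).mpr hjT) ?_
      have hbj : bn < p j ω := by
        have := mem_iInter₂.mp hωG j ((hmem j).mpr hjT)
        exact this
      have hMj : M j ω = ⨅ i : {i : Fin n // i ≠ j}, p i.1 ω := rfl
      rw [← hMj] at hcut
      exact ⟨hbj, by linarith⟩
    · left; exact hωG
  -- probability of G
  have hGprob : μpr G = (ENNReal.ofReal (1 - bn)) ^ s.card := by
    have hGeq : G = ⋂ i ∈ s, p i ⁻¹' Ioi bn := rfl
    have hterm : ∀ i ∈ s, μpr (p i ⁻¹' Ioi bn) = ENNReal.ofReal (1 - bn) := by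
      intro i hi
      rw [← Measure.map_apply (hmeas i) measurableSet_Ioi, hnull i ((hmem i).mp hi),
        Measure.restrict_apply measurableSet_Ioi]
      have h2 : Ioi bn ∩ Icc (0:ℝ) 1 = Ioc bn 1 := by
        ext x
        constructor
        · rintro ⟨h1x, _, h3x⟩; exact ⟨h1x, h3x⟩
        · rintro ⟨h1x, h2x⟩; exact ⟨h1x, le_trans hbn0 (le_of_lt h1x), h2x⟩
      rw [h2, Real.volume_Ioc]
    rw [hGeq, hindep.meas_biInter (fun i _ => ⟨Ioi bn, measurableSet_Ioi, rfl⟩),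
      Finset.prod_congr rfl hterm, Finset.prod_const]
  -- per-index bound μ (A j) ≤ γ μ (C j)
  have hAC : ∀ j ∈ s, μpr (A j) ≤ ENNReal.ofReal γ * μpr (C j) := by
    intro j hj
    haveI hne : Nonempty {i : Fin n // i ≠ j} := by
      by_cases h : j = ⟨0, by omega⟩
      · exact ⟨⟨⟨1, by omega⟩, by simp [h, Fin.ext_iff]⟩⟩
      · exact ⟨⟨⟨0, by omega⟩, fun hh => h hh.symm⟩⟩
    set Y : Ω → {i : Fin n // i ≠ j} → ℝ := fun ω i => p i.1 ω with hYdef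
    have hYm : Measurable Y := measurable_pi_lambda _ (fun i => hmeas i.1)
    have hXY : IndepFun (p j) Y μpr := by
      have h2 := hindep.indepFun_finset {j} ({j}ᶜ : Finset (Fin n)) (disjoint_compl_right)
        hmeas
      have hψ : Measurable
          (fun v : (({j} : Finset (Fin n)) → ℝ) => v ⟨j, Finset.mem_singleton_self j⟩) :=
        measurable_pi_apply _
      have hφ : Measurable
          (fun v : ((({j}ᶜ : Finset (Fin n)) : Finset (Fin n)) → ℝ) =>
            fun i : {i : Fin n // i ≠ j} =>
              v ⟨i.1, Finset.mem_compl.mpr (by simp [i.2])⟩) :=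
        measurable_pi_lambda _ (fun i => measurable_pi_apply _)
      exact h2.comp hψ hφ
    have hXu := hnull j ((hmem j).mp hj)
    have hWm : MeasurableSet {y : {i : Fin n // i ≠ j} → ℝ | ∀ i, y i ∈ Set.Icc (0:ℝ) 1} := by
      have : {y : {i : Fin n // i ≠ j} → ℝ | ∀ i, y i ∈ Set.Icc (0:ℝ) 1}
          = ⋂ i, (fun y : {i : Fin n // i ≠ j} → ℝ => y i) ⁻¹' Set.Icc (0:ℝ) 1 := by
        ext y; simp
      rw [this]
      exact MeasurableSet.iInter fun i => (measurable_pi_apply i) measurableSet_Icc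
    have hYae : ∀ᵐ y ∂(μpr.map Y), ∀ i, y i ∈ Set.Icc (0:ℝ) 1 := by
      rw [ae_map_iff hYm.aemeasurable hWm]
      filter_upwards [hall] with ω hω
      exact fun i => hω i.1
    have hk := hybrid_key μpr γ bn hγ0 hγ1 hbn0 hbn1 (p j) Y (hmeas j) hYm hXY hXu hYae
    have hAe : A j = {ω | bn < p j ω ∧ p j ω ≤ bn + γ * ((⨅ i, Y ω i) - bn)} := rfl
    have hCe : C j = {ω | bn < p j ω ∧ p j ω ≤ ⨅ i, Y ω i} := rfl
    rw [hAe, hCe]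
    exact hk
  -- null set of ties
  set N : Set Ω := ⋃ j ∈ s, ⋃ k ∈ s, ⋃ (_ : j ≠ k), {ω | p j ω = p k ω} with hNdef
  have hNnull : μpr N = 0 := by
    refine measure_iUnion_null fun j => measure_iUnion_null fun hj =>
      measure_iUnion_null fun k => measure_iUnion_null fun hk =>
      measure_iUnion_null fun hjk => ?_
    exact hybrid_ties μpr (p j) (p k) (hmeas j) (hmeas k)
      (hindep.indepFun hjk) (hnull k ((hmem k).mp hk))
  have hNm : MeasurableSet N := by
    refine MeasurableSet.biUnion s.countable_toSet fun j _ =>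
      MeasurableSet.biUnion s.countable_toSet fun k _ =>
      MeasurableSet.iUnion fun _ => ?_
    exact measurableSet_eq_fun (hmeas j) (hmeas k)
  have hCm : ∀ j, MeasurableSet (C j) := fun j =>
    (measurableSet_lt measurable_const (hmeas j)).inter
      (measurableSet_le (hmeas j) (hMm j))
  -- sum of the C j is at most μ G
  have hbdd : ∀ j (ω : Ω), BddBelow (Set.range fun i : {i : Fin n // i ≠ j} => p i.1 ω) :=
    fun j ω => Set.Finite.bddBelow (finite_range _)
  have hCsum : ∑ j ∈ s, μpr (C j) ≤ μpr G := by
    have heq : ∀ j ∈ s, μpr (C j) = μpr (C j \ N) :=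
      fun j _ => (measure_diff_null hNnull).symm
    rw [Finset.sum_congr rfl heq]
    have hdisj : Set.PairwiseDisjoint (↑s) (fun j => C j \ N) := by
      intro j hj k hk hjk
      rw [Function.onFun]
      rw [Set.disjoint_left]
      rintro ω ⟨hωj, hωN⟩ ⟨hωk, _⟩
      have h1 : p j ω ≤ p k ω :=
        le_trans hωj.2 (ciInf_le (hbdd j ω) ⟨k, fun hkj => hjk hkj.symm⟩)
      have h2 : p k ω ≤ p j ω :=
        le_trans hωk.2 (ciInf_le (hbdd k ω) ⟨j, hjk⟩)
      exact hωN (mem_biUnion hj (mem_biUnion hk (mem_iUnion.mpr ⟨hjk, le_antisymm h1 h2⟩)))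
    rw [← measure_biUnion_finset hdisj (fun j _ => (hCm j).diff hNm)]
    apply measure_mono
    rintro ω hω
    rw [mem_iUnion₂] at hω
    obtain ⟨j, hj, hωj, _⟩ := hω
    rw [hGdef, mem_iInter₂]
    intro i hi
    by_cases hij : i = j
    · subst hij; exact hωj.1
    · have : p j ω ≤ p i ω :=
        le_trans hωj.2 (ciInf_le (hbdd j ω) ⟨i, hij⟩)
      exact lt_of_lt_of_le hωj.1 this
  -- assemble
  have hmain : μpr {ω | ∃ j ∈ T, (∀ i, i ≠ j → p j ω ≤ p i ω) ∧
        p j ω ≤ γ * (⨅ i : {i : Fin n // i ≠ j}, p i.1 ω) + (1 - γ) * bn}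
      ≤ (1 - μpr G) + ENNReal.ofReal γ * μpr G := by
    calc μpr {ω | ∃ j ∈ T, (∀ i, i ≠ j → p j ω ≤ p i ω) ∧
          p j ω ≤ γ * (⨅ i : {i : Fin n // i ≠ j}, p i.1 ω) + (1 - γ) * bn}
        ≤ μpr (Gᶜ ∪ ⋃ j ∈ s, A j) := measure_mono hcover
      _ ≤ μpr Gᶜ + μpr (⋃ j ∈ s, A j) := measure_union_le _ _
      _ ≤ μpr Gᶜ + ∑ j ∈ s, μpr (A j) := by
          exact add_le_add_right (measure_biUnion_finset_le s A) _
      _ ≤ μpr Gᶜ + ∑ j ∈ s, ENNReal.ofReal γ * μpr (C j) := by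
          exact add_le_add_right (Finset.sum_le_sum hAC) _
      _ = μpr Gᶜ + ENNReal.ofReal γ * ∑ j ∈ s, μpr (C j) := by
          rw [Finset.mul_sum]
      _ ≤ μpr Gᶜ + ENNReal.ofReal γ * μpr G := by
          exact add_le_add_right (mul_le_mul_right hCsum _) _
      _ = (1 - μpr G) + ENNReal.ofReal γ * μpr G := by
          rw [prob_compl_eq_one_sub hGm]
  refine le_trans hmain ?_
  -- final numeric bound
  set k := s.card with hkdef
  have hkn : k ≤ n := by
    calc k ≤ (Finset.univ : Finset (Fin n)).card := Finset.card_le_card (Finset.subset_univ s)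
      _ = n := by simp
  have h1bn : (1:ℝ) - bn = c := by simp [hbndef]
  have hck0 : 0 ≤ c ^ k := le_of_lt (pow_pos hc0 k)
  have hck1 : c ^ k ≤ 1 := pow_le_one₀ (le_of_lt hc0) hc1
  have hckn : c ^ n ≤ c ^ k := pow_le_pow_of_le_one (le_of_lt hc0) hc1 hkn
  have hγc : γ * (1 - β) = α - β := div_mul_cancel₀ _ (ne_of_gt h1β)
  have hreal : 1 - c ^ k + γ * c ^ k ≤ α := by nlinarith [hckn, hcn, hγc, hγ1, hγ0]
  rw [hGprob, h1bn, ← ENNReal.ofReal_pow (le_of_lt hc0)]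
  have h1 : (1 : ENNReal) - ENNReal.ofReal (c ^ k) = ENNReal.ofReal (1 - c ^ k) := by
    rw [ENNReal.ofReal_sub _ hck0, ENNReal.ofReal_one]
  rw [h1, ← ENNReal.ofReal_mul hγ0,
    ← ENNReal.ofReal_add (by linarith) (mul_nonneg hγ0 hck0)]
  exact ENNReal.ofReal_le_ofReal hreal
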